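/- Let γ : [0,1] → ℝ² \ {0} be a continuous loop (γ(0) = γ(1)), and suppose there exist 0 = s₀ < s₁ < ⋯ < s_p = 1 such that on each arc γ([s_{k−1}, s_k]) some fixed coordinate (first or second) of γ has constant sign. Then the winding number of γ around 0 is computable from the sequence of sign tags (c_k, σ_k) ∈ {1,2} × {+,−} alone; in particular, it is the same for any other loop admitting the same tagging on the same subdivision. -/

import Mathlib

open Complex Classical

/-- The winding number around `0` of a loop `γ : [0,1] → ℂ \ {0}`, defined
through a continuous argument lift: a continuous `θ` with
`γ s = ‖γ s‖ · exp(i θ s)` on `[0,1]`; the winding number is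
`(θ 1 − θ 0) / (2π)`. -/
noncomputable def windingNumber (γ : ℝ → ℂ) : ℤ :=
  if h : ∃ θ : ℝ → ℝ, ContinuousOn θ (Set.Icc 0 1) ∧
      ∀ s ∈ Set.Icc (0 : ℝ) 1, γ s = (‖γ s‖ : ℂ) * Complex.exp ((θ s : ℂ) * Complex.I)
  then round ((h.choose 1 - h.choose 0) / (2 * Real.pi))
  else 0
/-- The coordinate of a point of `ℝ² ≅ ℂ`: coordinate `0` is the real part,
coordinate `1` the imaginary part. -/
def coordOf (c : Fin 2) (z : ℂ) : ℝ := if c = 0 then z.re else z.im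

/-- A loop together with a subdivision `0 = s₀ < s₁ < ⋯ < s_p = 1` and sign
tags `(c_k, σ_k)`: on the `k`-th arc, coordinate `c_k` of the loop has constant
sign `σ_k` (`true` for `+`, `false` for `−`). -/
def AdmitsTagging (γ : ℝ → ℂ) (p : ℕ) (s : Fin (p + 1) → ℝ)
    (c : Fin p → Fin 2) (σ : Fin p → Bool) : Prop :=
  ∀ k : Fin p, ∀ t ∈ Set.Icc (s k.castSucc) (s k.succ),
    if σ k then 0 < coordOf (c k) (γ t) else coordOf (c k) (γ t) < 0

/- ### Auxiliary lemmas -/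

/-- A continuous branch of the argument on the half-plane determined by
`(c, σ)`. -/
noncomputable def argBranch (c : Fin 2) (σ : Bool) (z : ℂ) : ℝ :=
  if c = 0 ∧ σ = false then Complex.arg (-z) + Real.pi else Complex.arg z

lemma coordOf_mul_real (c : Fin 2) (z : ℂ) (r : ℝ) :
    coordOf c (z * (r : ℂ)) = coordOf c z * r := by
  unfold coordOf; split <;> simp [Complex.mul_re, Complex.mul_im]

lemma coordOf_neg (c : Fin 2) (z : ℂ) : coordOf c (-z) = - coordOf c z := by
  unfold coordOf; split <;> simp

lemma ne_zero_of_tag {c : Fin 2} {σ : Bool} {z : ℂ}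
    (hz : if σ then 0 < coordOf c z else coordOf c z < 0) : z ≠ 0 := by
  rintro rfl
  unfold coordOf at hz
  cases σ <;> revert hz <;> split <;> simp

lemma argBranch_spec (c : Fin 2) (σ : Bool) (z : ℂ) :
    z = (‖z‖ : ℂ) * Complex.exp ((argBranch c σ z : ℂ) * Complex.I) := by
  unfold argBranch
  split_ifs with h
  · have habs : (‖-z‖ : ℝ) = ‖z‖ := by
      rw [norm_neg]
    have h1 : (‖z‖ : ℂ) * Complex.exp ((Complex.arg (-z) : ℂ) * Complex.I) = -z := by
      rw [← habs]; exact Complex.norm_mul_exp_arg_mul_I (-z)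
    have h2 : ((Complex.arg (-z) + Real.pi : ℝ) : ℂ) * Complex.I
        = (Complex.arg (-z) : ℂ) * Complex.I + Real.pi * Complex.I := by
      push_cast; ring
    rw [h2, Complex.exp_add, Complex.exp_pi_mul_I, ← mul_assoc, h1]
    ring
  · exact (Complex.norm_mul_exp_arg_mul_I z).symm

lemma argBranch_continuousAt (c : Fin 2) (σ : Bool) (z : ℂ)
    (hz : if σ then 0 < coordOf c z else coordOf c z < 0) :
    ContinuousAt (argBranch c σ) z := by
  unfold argBranch coordOf at *
  fin_cases c <;> cases σ <;> simp_all
  · exact ((Complex.continuousAt_arg (by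
        simp only [Complex.mem_slitPlane_iff, Complex.neg_re]
        left; linarith)).comp (continuous_neg.continuousAt)).add continuousAt_const
  · exact Complex.continuousAt_arg (by simp only [Complex.mem_slitPlane_iff]; left; exact hz)
  · exact Complex.continuousAt_arg (by
      simp only [Complex.mem_slitPlane_iff]; right; exact ne_of_lt hz)
  · exact Complex.continuousAt_arg (by
      simp only [Complex.mem_slitPlane_iff]; right; exact ne_of_gt hz)

/-- Two points in the same open half-plane are never antipodal (up to
positive scaling). -/
lemma not_antipodal {c : Fin 2} {σ : Bool} {z w : ℂ}
    (hz : if σ then 0 < coordOf c z else coordOf c z < 0)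
    (hw : if σ then 0 < coordOf c w else coordOf c w < 0) :
    z * ((‖w‖ : ℝ) : ℂ) ≠ -(w * ((‖z‖ : ℝ) : ℂ)) := by
  intro h
  have hz0 : z ≠ 0 := ne_zero_of_tag hz
  have hw0 : w ≠ 0 := ne_zero_of_tag hw
  have hnz : (0:ℝ) < ‖z‖ := norm_pos_iff.mpr hz0
  have hnw : (0:ℝ) < ‖w‖ := norm_pos_iff.mpr hw0
  have hcoord : coordOf c z * ‖w‖ = -(coordOf c w * ‖z‖) := by
    rw [← coordOf_mul_real, h, coordOf_neg, coordOf_mul_real]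
  cases σ <;> simp only [if_true, if_false, Bool.false_eq_true] at hz hw <;> nlinarith

/-- A continuous function on `[0,1]` avoiding the lattice `v + 2πℤ` whose
endpoint difference is a multiple of `2π` has equal endpoint values. -/
lemma avoid_lattice (ψ : ℝ → ℝ) (hc : ContinuousOn ψ (Set.Icc 0 1)) (v : ℝ)
    (hav : ∀ t ∈ Set.Icc (0:ℝ) 1, ∀ n : ℤ, ψ t ≠ v + 2 * Real.pi * n)
    (m : ℤ) (hm : ψ 1 - ψ 0 = 2 * Real.pi * m) : ψ 1 = ψ 0 := by
  have hπ := Real.pi_pos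
  have h2pi : (0:ℝ) < 2 * Real.pi := by positivity
  by_contra hne
  have hm0 : m ≠ 0 := by rintro rfl; apply hne; push_cast at hm; linarith
  rcases hm0.lt_or_gt with hmneg | hmpos
  · set k : ℤ := ⌈(ψ 1 - v) / (2 * Real.pi)⌉ with hk
    have hk1 : ψ 1 - v ≤ 2 * Real.pi * k := by
      have := Int.le_ceil ((ψ 1 - v) / (2 * Real.pi))
      rw [div_le_iff₀ h2pi] at this; linarith
    have hk2 : 2 * Real.pi * k < ψ 1 - v + 2 * Real.pi := by
      have h1 : (k:ℝ) - 1 < (ψ 1 - v) / (2 * Real.pi) := by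
        have := Int.ceil_lt_add_one ((ψ 1 - v) / (2 * Real.pi)); linarith
      rw [lt_div_iff₀ h2pi] at h1; linarith
    have hmle : (m:ℝ) ≤ -1 := by
      have hm1 : m ≤ -1 := by omega
      exact_mod_cast hm1
    have hstep : ψ 1 + 2 * Real.pi ≤ ψ 0 := by nlinarith
    obtain ⟨t, ht, hψt⟩ := intermediate_value_Icc' zero_le_one hc
      (Set.mem_Icc.mpr ⟨by linarith, by linarith⟩ :
        v + 2 * Real.pi * k ∈ Set.Icc (ψ 1) (ψ 0))
    exact hav t ht k hψt
  · set k : ℤ := ⌈(ψ 0 - v) / (2 * Real.pi)⌉ with hk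
    have hk1 : ψ 0 - v ≤ 2 * Real.pi * k := by
      have := Int.le_ceil ((ψ 0 - v) / (2 * Real.pi))
      rw [div_le_iff₀ h2pi] at this; linarith
    have hk2 : 2 * Real.pi * k < ψ 0 - v + 2 * Real.pi := by
      have h1 : (k:ℝ) - 1 < (ψ 0 - v) / (2 * Real.pi) := by
        have := Int.ceil_lt_add_one ((ψ 0 - v) / (2 * Real.pi)); linarith
      rw [lt_div_iff₀ h2pi] at h1; linarith
    have hmle : (1:ℝ) ≤ (m:ℝ) := by exact_mod_cast hmpos
    have hstep : ψ 0 + 2 * Real.pi ≤ ψ 1 := by nlinarith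
    obtain ⟨t, ht, hψt⟩ := intermediate_value_Icc zero_le_one hc
      (Set.mem_Icc.mpr ⟨by linarith, by linarith⟩ :
        v + 2 * Real.pi * k ∈ Set.Icc (ψ 0) (ψ 1))
    exact hav t ht k hψt

lemma exp_I_inj (x y : ℝ)
    (h : Complex.exp ((x:ℂ) * Complex.I) = Complex.exp ((y:ℂ) * Complex.I)) :
    ∃ n : ℤ, x - y = 2 * Real.pi * n := by
  rw [Complex.exp_eq_exp_iff_exists_int] at h
  obtain ⟨n, hn⟩ := h
  refine ⟨n, ?_⟩
  have h2 : ((x - y : ℝ) : ℂ) * Complex.I = ((2 * Real.pi * n : ℝ) : ℂ) * Complex.I := by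
    push_cast
    rw [sub_mul, hn]; ring
  have h3 := mul_right_cancel₀ Complex.I_ne_zero h2
  exact_mod_cast h3

/-- Every point of `[0,1]` lies in one of the arcs of the subdivision. -/
lemma exists_arc (p : ℕ) (hp : 0 < p) (s : Fin (p + 1) → ℝ) (hmono : StrictMono s)
    (h0 : s 0 = 0) (h1 : s (Fin.last p) = 1) :
    ∀ t ∈ Set.Icc (0:ℝ) 1, ∃ k : Fin p, t ∈ Set.Icc (s k.castSucc) (s k.succ) := by
  intro t ht
  classical
  set F : Finset (Fin (p+1)) := Finset.univ.filter (fun j => s j ≤ t) with hF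
  have hFne : F.Nonempty := ⟨0, by simp [hF, h0, ht.1]⟩
  set j : Fin (p+1) := F.max' hFne with hj
  have hjmem : s j ≤ t := by
    have := F.max'_mem hFne
    simpa [hF] using this
  by_cases hjp : (j : ℕ) < p
  · refine ⟨⟨j, hjp⟩, ⟨?_, ?_⟩⟩
    · exact hjmem
    · by_contra hlt
      push_neg at hlt
      have hmem : (Fin.succ (⟨j, hjp⟩ : Fin p)) ∈ F := by
        simp only [hF, Finset.mem_filter, Finset.mem_univ, true_and]
        exact le_of_lt hlt
      have hle := F.le_max' _ hmem
      rw [← hj] at hle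
      have : ((j:ℕ) + 1) ≤ (j:ℕ) := hle
      omega
  · have hjlast : j = Fin.last p := by
      apply Fin.ext; have := j.isLt; simp [Fin.last]; omega
    have ht1 : t = 1 := le_antisymm ht.2 (by rw [← h1, ← hjlast]; exact hjmem)
    refine ⟨⟨p - 1, Nat.sub_lt hp one_pos⟩, ⟨?_, ?_⟩⟩
    · have hlt : (Fin.castSucc (⟨p-1, Nat.sub_lt hp one_pos⟩ : Fin p)) < Fin.last p := by
        rw [Fin.lt_def]; simp [Fin.last]; omega
      rw [ht1, ← h1]
      exact le_of_lt (hmono hlt)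
    · have hsucc : (Fin.succ (⟨p-1, Nat.sub_lt hp one_pos⟩ : Fin p)) = Fin.last p := by
        apply Fin.ext; simp [Fin.last]; omega
      rw [hsucc, h1, ht1]

/-- A loop admitting a tagging has a continuous argument lift, built arc by
arc from the `argBranch` branches. -/
lemma exists_lift (p : ℕ) (s : Fin (p + 1) → ℝ) (hmono : StrictMono s)
    (h0 : s 0 = 0) (h1 : s (Fin.last p) = 1)
    (c : Fin p → Fin 2) (σ : Fin p → Bool) (γ : ℝ → ℂ)
    (hγ : ContinuousOn γ (Set.Icc 0 1))
    (hγtag : AdmitsTagging γ p s c σ) :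
    ∃ θ : ℝ → ℝ, ContinuousOn θ (Set.Icc 0 1) ∧
      ∀ t ∈ Set.Icc (0:ℝ) 1, γ t = (‖γ t‖ : ℂ) * Complex.exp ((θ t : ℂ) * Complex.I) := by
  have key : ∀ n : ℕ, ∀ hn : n ≤ p, ∃ θ : ℝ → ℝ,
      ContinuousOn θ (Set.Icc (s 0) (s ⟨n, Nat.lt_succ_of_le hn⟩)) ∧
      ∀ t ∈ Set.Icc (s 0) (s ⟨n, Nat.lt_succ_of_le hn⟩),
        γ t = (‖γ t‖ : ℂ) * Complex.exp ((θ t : ℂ) * Complex.I) := by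
    intro n
    induction n with
    | zero =>
      intro hn
      refine ⟨fun _ => Complex.arg (γ (s 0)), continuousOn_const, ?_⟩
      intro t ht
      have hfin : (⟨0, Nat.lt_succ_of_le hn⟩ : Fin (p+1)) = 0 := rfl
      rw [hfin] at ht
      have heq : t = s 0 := le_antisymm ht.2 ht.1
      subst heq
      exact (Complex.norm_mul_exp_arg_mul_I (γ (s 0))).symm
    | succ n ih =>
      intro hn
      have hnp : n < p := hn
      have hn' : n ≤ p := Nat.le_of_lt hnp
      obtain ⟨θ, hθc, hθe⟩ := ih hn'
      set k : Fin p := ⟨n, hnp⟩ with hkdef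
      have hcastEq : s (⟨n, Nat.lt_succ_of_le hn'⟩ : Fin (p+1)) = s k.castSucc := rfl
      rw [hcastEq] at hθc hθe
      set a := s k.castSucc with ha
      set b := s k.succ with hb
      have hab : a ≤ b := le_of_lt (hmono (Fin.castSucc_lt_succ (i := k)))
      have h0a : s 0 ≤ a := hmono.monotone (Fin.zero_le _)
      have hb1 : b ≤ 1 := by rw [← h1]; exact hmono.monotone (Fin.le_last _)
      have h00 : (0:ℝ) ≤ a := by rw [← h0]; exact h0a
      have hsub : Set.Icc a b ⊆ Set.Icc (0:ℝ) 1 := Set.Icc_subset_Icc h00 hb1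
      have htag := hγtag k
      rw [← ha, ← hb] at htag
      set d : ℝ := θ a - argBranch (c k) (σ k) (γ a) with hd
      refine ⟨fun t => if t ≤ a then θ t else argBranch (c k) (σ k) (γ t) + d, ?_, ?_⟩
      · apply ContinuousOn.if
        · intro t ht
          have hfr : t = a := by
            have h2 := ht.2
            rw [show {t : ℝ | t ≤ a} = Set.Iic a from rfl, frontier_Iic] at h2
            simpa using h2
          rw [hfr, hd]; ring
        · apply hθc.mono
          intro t ht
          rw [show {t : ℝ | t ≤ a} = Set.Iic a from rfl, closure_Iic] at ht
          exact ⟨ht.1.1, ht.2⟩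
        · have hclos : closure {t : ℝ | ¬ t ≤ a} = Set.Ici a := by
            rw [show {t : ℝ | ¬ t ≤ a} = Set.Ioi a by ext t; simp [not_le]]
            exact closure_Ioi a
          have hsub2 : Set.Icc (s 0) b ∩ closure {t : ℝ | ¬ t ≤ a} ⊆ Set.Icc a b := by
            intro t ht
            rw [hclos] at ht
            exact ⟨ht.2, ht.1.2⟩
          apply ContinuousOn.mono _ hsub2
          intro t ht
          exact ((argBranch_continuousAt _ _ _ (htag t ht)).comp_continuousWithinAt
            ((hγ.mono hsub) t ht)).add continuousWithinAt_const
      · intro t ht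
        by_cases hta : t ≤ a
        · simp only [if_pos hta]
          exact hθe t ⟨ht.1, hta⟩
        · simp only [if_neg hta]
          have htmem : t ∈ Set.Icc a b := ⟨le_of_not_ge hta, ht.2⟩
          have hbt := argBranch_spec (c k) (σ k) (γ t)
          have hamem : a ∈ Set.Icc a b := ⟨le_refl a, hab⟩
          have hza := ne_zero_of_tag (htag a hamem)
          have hba := argBranch_spec (c k) (σ k) (γ a)
          have hθa := hθe a ⟨h0a, le_refl a⟩
          have hnorm : ((‖γ a‖ : ℝ) : ℂ) ≠ 0 := by
            exact_mod_cast norm_ne_zero_iff.mpr hza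
          have hexp : Complex.exp ((θ a : ℂ) * Complex.I)
              = Complex.exp ((argBranch (c k) (σ k) (γ a) : ℂ) * Complex.I) :=
            mul_left_cancel₀ hnorm (hθa.symm.trans hba)
          have hdone : Complex.exp ((d : ℂ) * Complex.I) = 1 := by
            have hdi : ((d : ℝ) : ℂ) * Complex.I
                = (θ a : ℂ) * Complex.I - (argBranch (c k) (σ k) (γ a) : ℂ) * Complex.I := by
              rw [hd]; push_cast; ring
            rw [hdi, Complex.exp_sub, hexp, div_self (Complex.exp_ne_zero _)]
          calc γ t = (‖γ t‖ : ℂ)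
                * Complex.exp ((argBranch (c k) (σ k) (γ t) : ℂ) * Complex.I) := hbt
            _ = (‖γ t‖ : ℂ)
                * Complex.exp (((argBranch (c k) (σ k) (γ t) + d : ℝ) : ℂ) * Complex.I) := by
                rw [show (((argBranch (c k) (σ k) (γ t) + d : ℝ)) : ℂ) * Complex.I
                    = (argBranch (c k) (σ k) (γ t) : ℂ) * Complex.I
                      + (d : ℂ) * Complex.I by push_cast; ring,
                  Complex.exp_add, hdone, mul_one]
  obtain ⟨θ, hθc, hθe⟩ := key p (le_refl p)
  have hlast : s (⟨p, Nat.lt_succ_of_le (le_refl p)⟩ : Fin (p+1)) = 1 := h1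
  have hIcc : Set.Icc (s 0) (s (⟨p, Nat.lt_succ_of_le (le_refl p)⟩ : Fin (p+1)))
      = Set.Icc (0:ℝ) 1 := by rw [h0, hlast]
  rw [hIcc] at hθc hθe
  exact ⟨θ, hθc, hθe⟩

/-- The winding number around `0` of a continuous loop `γ : [0,1] → ℂ \ {0}`
is determined by a sign tagging of the arcs of a subdivision alone: any other
continuous loop admitting the same tags on the same subdivision has the same
winding number. -/
theorem winding_determined_by_tags (p : ℕ) (hp : 0 < p)
    (s : Fin (p + 1) → ℝ) (hmono : StrictMono s)
    (h0 : s 0 = 0) (h1 : s (Fin.last p) = 1)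
    (c : Fin p → Fin 2) (σ : Fin p → Bool)
    (γ δ : ℝ → ℂ)
    (hγ : ContinuousOn γ (Set.Icc 0 1)) (hδ : ContinuousOn δ (Set.Icc 0 1))
    (hγne : ∀ t ∈ Set.Icc (0 : ℝ) 1, γ t ≠ 0)
    (hδne : ∀ t ∈ Set.Icc (0 : ℝ) 1, δ t ≠ 0)
    (hγloop : γ 0 = γ 1) (hδloop : δ 0 = δ 1)
    (hγtag : AdmitsTagging γ p s c σ) (hδtag : AdmitsTagging δ p s c σ) :
    windingNumber γ = windingNumber δ := by
  have hexγ := exists_lift p s hmono h0 h1 c σ γ hγ hγtag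
  have hexδ := exists_lift p s hmono h0 h1 c σ δ hδ hδtag
  rw [windingNumber, windingNumber, dif_pos hexγ, dif_pos hexδ]
  obtain ⟨hθc, hθe⟩ := hexγ.choose_spec
  obtain ⟨hφc, hφe⟩ := hexδ.choose_spec
  set θ := hexγ.choose with hθdef
  set φ := hexδ.choose with hφdef
  have h0mem : (0:ℝ) ∈ Set.Icc (0:ℝ) 1 := ⟨le_refl 0, zero_le_one⟩
  have h1mem : (1:ℝ) ∈ Set.Icc (0:ℝ) 1 := ⟨zero_le_one, le_refl 1⟩
  suffices hsuff : θ 1 - θ 0 = φ 1 - φ 0 by rw [hsuff]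
  -- the difference of lifts avoids π + 2πℤ
  have hav : ∀ t ∈ Set.Icc (0:ℝ) 1, ∀ n : ℤ,
      (fun t => θ t - φ t) t ≠ Real.pi + 2 * Real.pi * n := by
    intro t ht n heq
    simp only at heq
    obtain ⟨k, hk⟩ := exists_arc p hp s hmono h0 h1 t ht
    have hγt := hγtag k t hk
    have hδt := hδtag k t hk
    have hγe := hθe t ht
    have hδe := hφe t ht
    have hθeq : (θ t : ℝ) = φ t + (Real.pi + 2 * Real.pi * n) := by linarith
    have hexpm : Complex.exp ((θ t : ℂ) * Complex.I)
        = - Complex.exp ((φ t : ℂ) * Complex.I) := by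
      have h2 : ((θ t : ℝ) : ℂ) * Complex.I
          = (φ t : ℂ) * Complex.I + ((Real.pi + 2 * Real.pi * n : ℝ) : ℂ) * Complex.I := by
        rw [hθeq]; push_cast; ring
      rw [h2, Complex.exp_add]
      have h3 : Complex.exp (((Real.pi + 2 * Real.pi * n : ℝ) : ℂ) * Complex.I) = -1 := by
        have h4 : ((Real.pi + 2 * Real.pi * n : ℝ) : ℂ) * Complex.I
            = (Real.pi : ℂ) * Complex.I + ((2 * Real.pi * n : ℝ) : ℂ) * Complex.I := by
          push_cast; ring
        rw [h4, Complex.exp_add, Complex.exp_pi_mul_I]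
        have h5 : Complex.exp (((2 * Real.pi * n : ℝ) : ℂ) * Complex.I) = 1 := by
          rw [Complex.exp_eq_one_iff]
          exact ⟨n, by push_cast; ring⟩
        rw [h5]; ring
      rw [h3]; ring
    have hanti : γ t * ((‖δ t‖ : ℝ) : ℂ) = -(δ t * ((‖γ t‖ : ℝ) : ℂ)) := by
      conv_lhs => rw [hγe]
      conv_rhs => rw [hδe]
      rw [hexpm]; ring
    exact not_antipodal hγt hδt hanti
  -- endpoint differences are multiples of 2π
  have hγend : Complex.exp ((θ 1 : ℂ) * Complex.I) = Complex.exp ((θ 0 : ℂ) * Complex.I) := by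
    have e0 := hθe 0 h0mem
    have e1 := hθe 1 h1mem
    have e1' : γ 0 = ((‖γ 0‖ : ℝ) : ℂ) * Complex.exp ((θ 1 : ℂ) * Complex.I) := by
      rw [hγloop]; exact e1
    have hnorm : ((‖γ 0‖ : ℝ) : ℂ) ≠ 0 := by
      exact_mod_cast norm_ne_zero_iff.mpr (hγne 0 h0mem)
    exact (mul_left_cancel₀ hnorm (e0.symm.trans e1')).symm
  have hδend : Complex.exp ((φ 1 : ℂ) * Complex.I) = Complex.exp ((φ 0 : ℂ) * Complex.I) := by
    have e0 := hφe 0 h0mem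
    have e1 := hφe 1 h1mem
    have e1' : δ 0 = ((‖δ 0‖ : ℝ) : ℂ) * Complex.exp ((φ 1 : ℂ) * Complex.I) := by
      rw [hδloop]; exact e1
    have hnorm : ((‖δ 0‖ : ℝ) : ℂ) ≠ 0 := by
      exact_mod_cast norm_ne_zero_iff.mpr (hδne 0 h0mem)
    exact (mul_left_cancel₀ hnorm (e0.symm.trans e1')).symm
  obtain ⟨nγ, hnγ⟩ := exp_I_inj (θ 1) (θ 0) hγend
  obtain ⟨nδ, hnδ⟩ := exp_I_inj (φ 1) (φ 0) hδend
  have hm : (fun t => θ t - φ t) 1 - (fun t => θ t - φ t) 0 = 2 * Real.pi * ((nγ - nδ : ℤ)) := by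
    simp only
    push_cast
    linear_combination hnγ - hnδ
  have := avoid_lattice (fun t => θ t - φ t) (hθc.sub hφc) Real.pi hav (nγ - nδ) hm
  linarith
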